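/- For every p > 1 one has the energy identity ∫_{-1}^{1} (u_p'(t))² dt = ∫_{-1}^{1} u_p^{p+1}(t) dt, and moreover there exist constants c > 0, C > 0 and p₀ > 1 such that c ≤ ∫_{-1}^{1} u_p^{p+1}(t) dt ≤ C for all p ≥ p₀. -/

import Mathlib

open Real Set Filter Topology

noncomputable section

/-- `u` is the (unique) positive solution of the one-dimensional Lane–Emden problem
`-u'' = u^p` on `(-1,1)` with `u(-1) = u(1) = 0`; it is even, positive on `(-1,1)`,
decreasing on `[0,1]`, and its sup norm is attained at `0`. -/
def IsLaneEmden (p : ℝ) (u : ℝ → ℝ) : Prop :=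
  ContDiff ℝ 2 u ∧
  (∀ t ∈ Ioo (-1 : ℝ) 1, deriv (deriv u) t = -(u t ^ p)) ∧
  u (-1) = 0 ∧ u 1 = 0 ∧
  (∀ t ∈ Ioo (-1 : ℝ) 1, 0 < u t) ∧
  (∀ t : ℝ, u (-t) = u t) ∧
  (∀ ⦃s t : ℝ⦄, s ∈ Icc (0 : ℝ) 1 → t ∈ Icc (0 : ℝ) 1 → s ≤ t → u t ≤ u s) ∧
  (∀ t ∈ Icc (-1 : ℝ) 1, u t ≤ u 0)

namespace LEaux

lemma ae_ne' (c : ℝ) : ∀ᵐ x : ℝ, x ≠ c :=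
  MeasureTheory.measure_eq_zero_iff_ae_notMem.mp Real.volume_singleton

variable {p : ℝ} {v : ℝ → ℝ}

lemma smooth (hL : IsLaneEmden p v) :
    Differentiable ℝ v ∧ Differentiable ℝ (deriv v) ∧ Continuous (deriv (deriv v)) := by
  have h2 : ContDiff ℝ (1+1 : ℕ) v := by exact_mod_cast hL.1
  rw [show ((1+1:ℕ):WithTop ℕ∞) = (1:WithTop ℕ∞)+1 by norm_cast] at h2
  have h4 := contDiff_one_iff_deriv.mp (contDiff_succ_iff_deriv.mp h2).2.2
  exact ⟨(contDiff_succ_iff_deriv.mp h2).1, h4.1, h4.2⟩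

lemma deriv_odd (hL : IsLaneEmden p v) (t : ℝ) : deriv v (-t) = -deriv v t := by
  obtain ⟨hd1, hd2, hc2⟩ := smooth hL
  have h1 : HasDerivAt (fun s => v (-s)) (deriv v (-t) * (-1)) t :=
    ((hd1 (-t)).hasDerivAt).comp t (hasDerivAt_neg t)
  have h2 : (fun s => v (-s)) = v := funext hL.2.2.2.2.2.1
  rw [h2] at h1
  linarith [h1.deriv]

lemma deriv_zero (hL : IsLaneEmden p v) : deriv v 0 = 0 := by
  have := deriv_odd hL 0
  rw [neg_zero] at this; linarith

lemma cont_rpow (hL : IsLaneEmden p v) {q : ℝ} (hq : 0 < q) :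
    Continuous (fun t => v t ^ q) := by
  have h1 : Continuous (fun x : ℝ => x ^ q) := by
    rw [continuous_iff_continuousAt]
    exact fun x => Real.continuousAt_rpow_const x q (Or.inr hq.le)
  exact h1.comp (smooth hL).1.continuous

lemma nonneg (hL : IsLaneEmden p v) : ∀ t ∈ Icc (0:ℝ) 1, 0 ≤ v t := by
  intro t ht
  rcases eq_or_lt_of_le ht.2 with h | h
  · rw [h, hL.2.2.2.1]
  · exact (hL.2.2.2.2.1 t ⟨by linarith [ht.1], h⟩).le

lemma energyPt (hp : 1 < p) (hL : IsLaneEmden p v) :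
    ∀ t ∈ Icc (-1:ℝ) 1, deriv v t * deriv v t
      = 2/(p+1) * (v 0 ^ (p+1) - v t ^ (p+1)) := by
  obtain ⟨hd1, hd2, hc2⟩ := smooth hL
  set H : ℝ → ℝ := fun t => deriv v t * deriv v t / 2 + v t ^ (p+1) / (p+1) with hH
  have hp1 : (0:ℝ) < p + 1 := by linarith
  have hHd : ∀ t ∈ Ioo (-1:ℝ) 1, HasDerivAt H 0 t := by
    intro t ht
    have h1 : HasDerivAt (fun s => deriv v s * deriv v s / 2)
        ((deriv (deriv v) t * deriv v t + deriv v t * deriv (deriv v) t)/2) t :=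
      (((hd2 t).hasDerivAt).mul ((hd2 t).hasDerivAt)).div_const 2
    have h2 : HasDerivAt (fun s => v s ^ (p+1) / (p+1))
        (((p+1) * v t ^ (p+1-1) * deriv v t)/(p+1)) t :=
      (((Real.hasDerivAt_rpow_const (x := v t) (p := p+1)
        (Or.inr (by linarith))).comp t (hd1 t).hasDerivAt)).div_const (p+1)
    have h3 := h1.add h2
    have he : (deriv (deriv v) t * deriv v t + deriv v t * deriv (deriv v) t)/2
        + ((p+1) * v t ^ (p+1-1) * deriv v t)/(p+1) = 0 := by
      rw [hL.2.1 t ht, show p + 1 - 1 = p by ring]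
      field_simp
      ring
    rw [he] at h3
    exact h3
  have hHcont : Continuous H :=
    ((hd2.continuous.mul hd2.continuous).div_const 2).add
      ((cont_rpow hL hp1).div_const (p+1))
  have hIoo : ∀ t ∈ Ioo (-1:ℝ) 1, H t = H 0 := by
    intro t ht
    rcases le_or_gt 0 t with h0 | h0
    · exact constant_of_has_deriv_right_zero (f := H) (a := 0) (b := t)
        hHcont.continuousOn
        (fun x hx => (hHd x ⟨by linarith [hx.1], lt_trans hx.2 ht.2⟩).hasDerivWithinAt)
        t ⟨h0, le_refl t⟩
    · exact (constant_of_has_deriv_right_zero (f := H) (a := t) (b := 0)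
        hHcont.continuousOn
        (fun x hx => (hHd x ⟨lt_of_lt_of_le ht.1 hx.1, by linarith [hx.2]⟩).hasDerivWithinAt)
        0 ⟨h0.le, le_refl 0⟩).symm
  have hIcc : ∀ t ∈ Icc (-1:ℝ) 1, H t = H 0 := by
    have hcl : EqOn H (fun _ => H 0) (closure (Ioo (-1:ℝ) 1)) :=
      Set.EqOn.closure (fun x hx => hIoo x hx) hHcont continuous_const
    rw [closure_Ioo (by norm_num : (-1:ℝ) ≠ 1)] at hcl
    exact fun t ht => hcl ht
  intro t ht
  have h := hIcc t ht
  have h0 : deriv v 0 = 0 := deriv_zero hL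
  simp only [hH, h0] at h
  field_simp at h ⊢
  nlinarith [hp1, sq_nonneg (p+1)]

lemma identity (hp : 1 < p) (hL : IsLaneEmden p v) :
    (∫ t in (-1:ℝ)..1, (deriv v t) ^ 2) = ∫ t in (-1:ℝ)..1, v t ^ (p+1) := by
  obtain ⟨hd1, hd2, hc2⟩ := smooth hL
  have hibp := intervalIntegral.integral_mul_deriv_eq_deriv_mul
    (a := (-1:ℝ)) (b := 1) (u := v) (v := deriv v)
    (u' := deriv v) (v' := deriv (deriv v))
    (fun x _ => (hd1 x).hasDerivAt) (fun x _ => (hd2 x).hasDerivAt)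
    (hd2.continuous.intervalIntegrable _ _) (hc2.intervalIntegrable _ _)
  rw [hL.2.2.1, hL.2.2.2.1] at hibp
  have hcongr : (∫ t in (-1:ℝ)..1, v t * deriv (deriv v) t)
      = ∫ t in (-1:ℝ)..1, -(v t ^ (p+1)) := by
    apply intervalIntegral.integral_congr_ae
    filter_upwards [ae_ne' (1:ℝ)] with x hx1 hx
    rw [uIoc_of_le (by norm_num : (-1:ℝ) ≤ 1)] at hx
    have hxIoo : x ∈ Ioo (-1:ℝ) 1 := ⟨hx.1, lt_of_le_of_ne hx.2 hx1⟩
    rw [hL.2.1 x hxIoo, Real.rpow_add_one (ne_of_gt (hL.2.2.2.2.1 x hxIoo))]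
    ring
  rw [hcongr, intervalIntegral.integral_neg] at hibp
  have h2 : (∫ t in (-1:ℝ)..1, deriv v t * deriv v t)
      = ∫ t in (-1:ℝ)..1, (deriv v t)^2 := by
    apply intervalIntegral.integral_congr
    intro x _
    exact (pow_two (deriv v x)).symm
  linarith [hibp, h2]

lemma deriv_eq_integral (hL : IsLaneEmden p v) :
    ∀ t ∈ Icc (0:ℝ) 1, deriv v t = -∫ s in (0:ℝ)..t, v s ^ p := by
  obtain ⟨hd1, hd2, hc2⟩ := smooth hL
  intro t ht
  have hftc : (∫ s in (0:ℝ)..t, deriv (deriv v) s) = deriv v t - deriv v 0 :=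
    intervalIntegral.integral_deriv_eq_sub (fun x _ => hd2 x)
      (hc2.intervalIntegrable _ _)
  have hcongr : (∫ s in (0:ℝ)..t, deriv (deriv v) s) = ∫ s in (0:ℝ)..t, -(v s ^ p) := by
    apply intervalIntegral.integral_congr_ae
    filter_upwards [ae_ne' (1:ℝ)] with x hx1 hx
    rw [uIoc_of_le ht.1] at hx
    exact hL.2.1 x ⟨by linarith [hx.1], lt_of_le_of_ne (le_trans hx.2 ht.2) hx1⟩
  rw [hcongr, intervalIntegral.integral_neg, deriv_zero hL, sub_zero] at hftc
  linarith

lemma deriv_anti (hp : 1 < p) (hL : IsLaneEmden p v) :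
    ∀ s ∈ Icc (0:ℝ) 1, ∀ t ∈ Icc (0:ℝ) 1, s ≤ t → deriv v t ≤ deriv v s := by
  have hcont : Continuous (fun s => v s ^ p) := cont_rpow hL (by linarith)
  intro s hs t ht hst
  rw [deriv_eq_integral hL s hs, deriv_eq_integral hL t ht]
  have hadd : (∫ x in (0:ℝ)..s, v x ^ p) + (∫ x in s..t, v x ^ p)
      = ∫ x in (0:ℝ)..t, v x ^ p :=
    intervalIntegral.integral_add_adjacent_intervals
      (hcont.intervalIntegrable _ _) (hcont.intervalIntegrable _ _)
  have hnn : (0:ℝ) ≤ ∫ x in s..t, v x ^ p := by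
    apply intervalIntegral.integral_nonneg hst
    intro x hx
    exact Real.rpow_nonneg (nonneg hL x ⟨le_trans hs.1 hx.1, le_trans hx.2 ht.2⟩) p
  linarith

lemma deriv_nonpos (hp : 1 < p) (hL : IsLaneEmden p v) :
    ∀ t ∈ Icc (0:ℝ) 1, deriv v t ≤ 0 := by
  intro t ht
  have := deriv_anti hp hL 0 ⟨le_refl 0, by norm_num⟩ t ht ht.1
  rw [deriv_zero hL] at this
  exact this

/-- `E * (p+3) = 4 * M^(p+1)` -/
lemma E_eq (hp : 1 < p) (hL : IsLaneEmden p v) :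
    (∫ t in (-1:ℝ)..1, v t ^ (p+1)) * (p+3) = 4 * v 0 ^ (p+1) := by
  have hp1 : (0:ℝ) < p + 1 := by linarith
  have hcont : Continuous (fun t => v t ^ (p+1)) := cont_rpow hL hp1
  have h1 : (∫ t in (-1:ℝ)..1, (deriv v t) ^ 2)
      = ∫ t in (-1:ℝ)..1, 2/(p+1) * (v 0 ^ (p+1) - v t ^ (p+1)) := by
    apply intervalIntegral.integral_congr
    intro x hx
    rw [uIcc_of_le (by norm_num : (-1:ℝ) ≤ 1)] at hx
    show deriv v x ^ 2 = 2/(p+1) * (v 0 ^ (p+1) - v x ^ (p+1))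
    rw [pow_two]
    exact energyPt hp hL x hx
  rw [intervalIntegral.integral_const_mul, intervalIntegral.integral_sub
    (intervalIntegrable_const) (hcont.intervalIntegrable _ _),
    intervalIntegral.integral_const] at h1
  rw [identity hp hL] at h1
  have h2 : ((1:ℝ) - (-1)) = 2 := by norm_num
  rw [h2, smul_eq_mul] at h1
  have hne : p + 1 ≠ 0 := ne_of_gt hp1
  field_simp at h1
  nlinarith [h1]

/-- for `p ≥ 3`: `(p+1)/2 ≤ M^(p-1)` and `1 ≤ M`. -/
lemma M_lower (hp : 3 ≤ p) (hL : IsLaneEmden p v) :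
    1 ≤ v 0 ∧ (p+1)/2 * (v 0 * v 0) ≤ v 0 ^ (p+1) := by
  have hp1 : (1:ℝ) < p := by linarith
  have hM0 : 0 < v 0 := hL.2.2.2.2.1 0 (by norm_num)
  set M := v 0 with hM
  -- M ≤ - deriv v 1
  have hd1 : deriv v 1 ≤ 0 := deriv_nonpos hp1 hL 1 (by norm_num)
  have hFTC : (∫ t in (0:ℝ)..1, deriv v t) = v 1 - v 0 :=
    intervalIntegral.integral_deriv_eq_sub (fun x _ => (smooth hL).1 x)
      ((smooth hL).2.1.continuous.intervalIntegrable _ _)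
  have hmono : (∫ t in (0:ℝ)..1, deriv v 1) ≤ ∫ t in (0:ℝ)..1, deriv v t := by
    apply intervalIntegral.integral_mono_on (by norm_num)
      (intervalIntegrable_const) ((smooth hL).2.1.continuous.intervalIntegrable _ _)
    intro x hx
    exact deriv_anti hp1 hL x hx 1 (by norm_num) hx.2
  rw [intervalIntegral.integral_const, hFTC, hL.2.2.2.1] at hmono
  simp only [smul_eq_mul, sub_zero, one_mul] at hmono
  -- hmono : (1-0) * deriv v 1 ≤ 0 - M
  have hMle : M ≤ -deriv v 1 := by
    simp only [hM]; linarith [hmono]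
  -- energy at 1
  have hE1 := energyPt hp1 hL 1 (by norm_num)
  rw [hL.2.2.2.1, Real.zero_rpow (ne_of_gt (by linarith : (0:ℝ) < p+1)), sub_zero] at hE1
  -- M^2 ≤ (deriv v 1)^2 = 2/(p+1) M^{p+1}
  have hsq : M * M ≤ deriv v 1 * deriv v 1 := by nlinarith [hMle, hd1, hM0]
  have hkey : (p+1)/2 * (M * M) ≤ M ^ (p+1) := by
    rw [hE1] at hsq
    have hp1' : (0:ℝ) < p + 1 := by linarith
    have h3 : (p+1)*(M*M) ≤ (p+1)*(2/(p+1) * v 0 ^ (p+1)) :=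
      mul_le_mul_of_nonneg_left hsq hp1'.le
    have h4 : (p+1)*(2/(p+1) * v 0 ^ (p+1)) = 2 * v 0 ^ (p+1) := by field_simp
    rw [h4] at h3
    simp only [hM]
    linarith [h3]
  refine ⟨?_, hkey⟩
  -- 1 ≤ M
  by_contra hcon
  push_neg at hcon
  have hsplit : M ^ (p+1) = M ^ (p-1) * (M * M) := by
    rw [show p + 1 = (p-1) + 2 by ring, Real.rpow_add hM0,
      show (2:ℝ) = ((2:ℕ):ℝ) by norm_num, Real.rpow_natCast, pow_two]
  have hle1 : M ^ (p-1) ≤ 1 := Real.rpow_le_one hM0.le hcon.le (by linarith)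
  rw [hsplit] at hkey
  have hMM : 0 < M * M := mul_pos hM0 hM0
  nlinarith [hkey, hle1, hMM]

set_option maxHeartbeats 1000000 in
lemma bounds (hp : 3 ≤ p) (hL : IsLaneEmden p v) :
    1 ≤ (∫ t in (-1:ℝ)..1, v t ^ (p+1)) ∧ (∫ t in (-1:ℝ)..1, v t ^ (p+1)) ≤ 100 := by
  have hp1 : (1:ℝ) < p := by linarith
  have hM0 : 0 < v 0 := hL.2.2.2.2.1 0 (by norm_num)
  obtain ⟨hM1, hMkey⟩ := M_lower hp hL
  have hEeq := E_eq hp1 hL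
  set E := (∫ t in (-1:ℝ)..1, v t ^ (p+1)) with hE
  set M := v 0 with hM
  constructor
  · -- lower bound : E (p+3) = 4 M^{p+1} ≥ 4 (p+1)/2 * M² ≥ 2(p+1) ≥ p+3
    have hMM : 1 ≤ M * M := by nlinarith [hM1]
    have h1 : (p+1)/2 ≤ (p+1)/2 * (M*M) := by nlinarith [hMM]
    nlinarith [hEeq, hMkey, h1]
  · -- upper bound
    set K := v (1/2) with hK
    have hK0 : 0 < K := hL.2.2.2.2.1 (1/2) (by norm_num)
    have hKM : K ≤ M := hL.2.2.2.2.2.2.2 (1/2) (by norm_num)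
    have hKnn : (0:ℝ) ≤ K := hK0.le
    -- step 1: deriv v (1/2) ≤ -(1/2) K^p
    have hd12 : deriv v (1/2) ≤ -(1/2) * K ^ p := by
      rw [deriv_eq_integral hL (1/2) (by norm_num)]
      have : (∫ s in (0:ℝ)..(1/2:ℝ), K ^ p) ≤ ∫ s in (0:ℝ)..(1/2:ℝ), v s ^ p := by
        apply intervalIntegral.integral_mono_on (by norm_num)
          (intervalIntegrable_const) ((cont_rpow hL (by linarith)).intervalIntegrable _ _)
        intro x hx
        exact Real.rpow_le_rpow hKnn
          (hL.2.2.2.2.2.2.1 ⟨hx.1, by linarith [hx.2]⟩ (by norm_num) (by linarith [hx.2]))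
          (by linarith)
      rw [intervalIntegral.integral_const, smul_eq_mul] at this
      linarith [this]
    -- step 2: K^{p-1} ≤ 4
    have hstep2 : K ^ (p-1) ≤ 4 := by
      have hint : (∫ t in (1/2:ℝ)..1, deriv v t) = v 1 - v (1/2) :=
        intervalIntegral.integral_deriv_eq_sub (fun x _ => (smooth hL).1 x)
          ((smooth hL).2.1.continuous.intervalIntegrable _ _)
      have hmono : (∫ t in (1/2:ℝ)..1, deriv v t) ≤ ∫ t in (1/2:ℝ)..1, -(1/2) * K ^ p := by
        apply intervalIntegral.integral_mono_on (by norm_num)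
          ((smooth hL).2.1.continuous.intervalIntegrable _ _) (intervalIntegrable_const)
        intro x hx
        calc deriv v x ≤ deriv v (1/2) :=
              deriv_anti hp1 hL (1/2) (by norm_num) x ⟨by linarith [hx.1], hx.2⟩ hx.1
          _ ≤ -(1/2) * K ^ p := hd12
      rw [hint, intervalIntegral.integral_const, smul_eq_mul, hL.2.2.2.1] at hmono
      -- 0 - K ≤ (1/2)(-(1/2) K^p)
      have hKp : K ^ p ≤ 4 * K := by linarith [hmono]
      have hsplit : K ^ p = K ^ (p-1) * K := by
        nth_rewrite 1 [show p = (p-1) + 1 by ring]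
        rw [Real.rpow_add_one hK0.ne']
      rw [hsplit] at hKp
      have := (mul_le_mul_iff_left₀ hK0).mp (by linarith [hKp] : K ^ (p-1) * K ≤ 4 * K)
      exact this
    -- step 3: K ≤ 2
    have hKle2 : K ≤ 2 := by
      by_contra hcon
      push_neg at hcon
      have h1 : (2:ℝ) ^ (p-1) < K ^ (p-1) :=
        Real.rpow_lt_rpow (by norm_num) hcon (by linarith)
      have h2 : (4:ℝ) ≤ (2:ℝ) ^ (p-1) := by
        have : (2:ℝ) ^ (2:ℝ) ≤ (2:ℝ) ^ (p-1) :=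
          Real.rpow_le_rpow_of_exponent_le (by norm_num) (by linarith)
        rw [show (2:ℝ) = ((2:ℕ):ℝ) by norm_num, Real.rpow_natCast] at this
        norm_num at this
        linarith [this]
      linarith [h1, h2, hstep2]
    -- step 4: M^{p+1} ≤ K^{p+1} + 2(p+1) K²
    have hB : (0:ℝ) ≤ 2/(p+1) * (M ^ (p+1) - K ^ (p+1)) := by
      have : K ^ (p+1) ≤ M ^ (p+1) := Real.rpow_le_rpow hKnn hKM (by linarith)
      have hp1' : (0:ℝ) < p+1 := by linarith
      apply mul_nonneg (by positivity) (by linarith)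
    set B := 2/(p+1) * (M ^ (p+1) - K ^ (p+1)) with hBdef
    have hsqrtB : ∀ t ∈ Icc (1/2:ℝ) 1, deriv v t ≤ -Real.sqrt B := by
      intro t ht
      have hEt := energyPt hp1 hL t ⟨by linarith [ht.1], ht.2⟩
      have hvt : v t ≤ K := hL.2.2.2.2.2.2.1 (by norm_num) ⟨by linarith [ht.1], ht.2⟩ ht.1
      have hvtp : v t ^ (p+1) ≤ K ^ (p+1) :=
        Real.rpow_le_rpow (nonneg hL t ⟨by linarith [ht.1], ht.2⟩) hvt (by linarith)
      have hBle : B ≤ deriv v t * deriv v t := by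
        rw [hEt, hBdef]
        have hp1' : (0:ℝ) < p+1 := by linarith
        apply mul_le_mul_of_nonneg_left _ (by positivity : (0:ℝ) ≤ 2/(p+1))
        linarith
      have hd0 : deriv v t ≤ 0 := deriv_nonpos hp1 hL t ⟨by linarith [ht.1], ht.2⟩
      have h1 : Real.sqrt B ≤ Real.sqrt (deriv v t * deriv v t) := Real.sqrt_le_sqrt hBle
      rw [show deriv v t * deriv v t = (-deriv v t)^2 by ring, Real.sqrt_sq (by linarith)] at h1
      linarith
    -- integrate
    have hint : (∫ t in (1/2:ℝ)..1, deriv v t) = v 1 - v (1/2) :=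
      intervalIntegral.integral_deriv_eq_sub (fun x _ => (smooth hL).1 x)
        ((smooth hL).2.1.continuous.intervalIntegrable _ _)
    have hmono2 : (∫ t in (1/2:ℝ)..1, deriv v t) ≤ ∫ t in (1/2:ℝ)..1, -Real.sqrt B := by
      apply intervalIntegral.integral_mono_on (by norm_num)
        ((smooth hL).2.1.continuous.intervalIntegrable _ _) (intervalIntegrable_const)
      exact hsqrtB
    rw [hint, intervalIntegral.integral_const, smul_eq_mul, hL.2.2.2.1] at hmono2
    -- -K ≤ (1/2) * (-√B)  ⇒ √B ≤ 2K ⇒ B ≤ 4K²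
    have hsB : Real.sqrt B ≤ 2 * K := by linarith [hmono2]
    have hB4 : B ≤ 4 * K^2 := by
      have := Real.sq_sqrt hB
      nlinarith [hsB, Real.sqrt_nonneg B]
    -- M^{p+1} ≤ K^{p+1} + 2(p+1)K²
    have hMup : M ^ (p+1) ≤ K ^ (p+1) + 2*(p+1)*K^2 := by
      rw [hBdef] at hB4
      have hp1' : (0:ℝ) < p+1 := by linarith
      rw [div_mul_eq_mul_div, div_le_iff₀ hp1'] at hB4
      nlinarith [hB4]
    -- K^{p+1} ≤ 16
    have hKp1 : K ^ (p+1) ≤ 16 := by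
      have hsplit : K ^ (p+1) = K ^ (p-1) * (K * K) := by
        rw [show p + 1 = (p-1) + 2 by ring, Real.rpow_add hK0,
          show (2:ℝ) = ((2:ℕ):ℝ) by norm_num, Real.rpow_natCast, pow_two]
      rw [hsplit]
      nlinarith [hstep2, hKle2, hK0]
    have hK2 : K^2 ≤ 4 := by nlinarith [hKle2, hK0]
    -- conclude
    have hMfin : M ^ (p+1) ≤ 16 + 8*(p+1) := by nlinarith [hMup, hKp1, hK2]
    nlinarith [hEeq, hMfin]

end LEaux

/-- Energy identity and uniform two-sided bounds on the energy as `p → +∞`. -/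
theorem energy_identity_and_bounds
    (u : ℝ → ℝ → ℝ) (hu : ∀ p : ℝ, 1 < p → IsLaneEmden p (u p)) :
    (∀ p : ℝ, 1 < p →
      (∫ t in (-1 : ℝ)..1, (deriv (u p) t) ^ 2) = ∫ t in (-1 : ℝ)..1, u p t ^ (p + 1)) ∧
    ∃ c > (0 : ℝ), ∃ C > (0 : ℝ), ∃ p₀ > (1 : ℝ), ∀ p ≥ p₀,
      c ≤ (∫ t in (-1 : ℝ)..1, u p t ^ (p + 1)) ∧
      (∫ t in (-1 : ℝ)..1, u p t ^ (p + 1)) ≤ C := by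
  constructor
  · exact fun p hp => LEaux.identity hp (hu p hp)
  · refine ⟨1, by norm_num, 100, by norm_num, 3, by norm_num, fun p hp => ?_⟩
    exact LEaux.bounds hp (hu p (by linarith))
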